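/- Let q be a prime power and m a positive integer. If g(x) ∈ F_{q^m}(x) is a rational function of the form u·x + v·x^{−1} with u, v ∈ F_q and g(x) = h(x)^{q^m} − h(x) for some rational function h(x) ∈ F_{q^m}(x), then u = v = 0. -/

import Mathlib

open Polynomial


/-- If g(x) = u·x + v·x⁻¹ ∈ F_{q^m}(x) with u, v ∈ F_q satisfies
g = h^{q^m} − h for some rational function h ∈ F_{q^m}(x), then u = v = 0. -/
theorem stmt_11 (q m : ℕ) (hq : ∃ (p k : ℕ), p.Prime ∧ 0 < k ∧ q = p ^ k)
    (hm : 0 < m) (E F : Type*) [Field E] [Fintype E] [Field F] [Fintype F]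
    [Algebra E F] (hE : Fintype.card E = q) (hF : Fintype.card F = q ^ m)
    (u v : E)
    (h : ∃ h : RatFunc F,
      RatFunc.C (algebraMap E F u) * RatFunc.X +
        RatFunc.C (algebraMap E F v) * RatFunc.X⁻¹ = h ^ (q ^ m) - h) :
    u = 0 ∧ v = 0 := by
  obtain ⟨p, k, hp, hk, rfl⟩ := hq
  obtain ⟨h, hh⟩ := h
  set Q := (p ^ k) ^ m with hQ
  have hQ2 : 2 ≤ Q := by
    have h1 : 2 ≤ p ^ k := hp.two_le.trans (Nat.le_self_pow hk.ne' p)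
    exact h1.trans (Nat.le_self_pow hm.ne' _)
  set u' := algebraMap E F u with hu'
  set v' := algebraMap E F v with hv'
  set a := h.num with ha
  set b := h.denom with hb
  have hab : IsCoprime a b := RatFunc.isCoprime_num_denom h
  have hbne : b ≠ 0 := RatFunc.denom_ne_zero h
  have key : (C u' * X^2 + C v') * b^Q = X * (a^Q - a * b^(Q-1)) := by
    apply RatFunc.algebraMap_injective F
    have hB : (algebraMap F[X] (RatFunc F)) b ≠ 0 := RatFunc.algebraMap_ne_zero hbne
    have hX : (RatFunc.X : RatFunc F) ≠ 0 := RatFunc.X_ne_zero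
    have hnd : (algebraMap F[X] (RatFunc F)) a / (algebraMap F[X] (RatFunc F)) b = h :=
      RatFunc.num_div_denom h
    rw [← hnd] at hh
    simp only [map_mul, map_add, map_pow, map_sub, RatFunc.algebraMap_X, RatFunc.algebraMap_C]
    have hpow2 : (algebraMap F[X] (RatFunc F)) b ^ (Q-1) * (algebraMap F[X] (RatFunc F)) b
        = (algebraMap F[X] (RatFunc F)) b ^ Q := by
      rw [← pow_succ]; congr 1; omega
    rw [div_pow] at hh
    field_simp at hh ⊢
    apply mul_right_cancel₀ hB
    linear_combination hh + RatFunc.X * (algebraMap F[X] (RatFunc F)) a * hpow2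
  have hXp : Prime (X : F[X]) := Polynomial.prime_X
  have hXne : (X : F[X]) ≠ 0 := X_ne_zero
  -- X does not divide b
  have hXb : ¬ ((X : F[X]) ∣ b) := by
    intro hd
    have hXa : ¬ (X : F[X]) ∣ a := fun hda => hXp.not_unit (hab.isUnit_of_dvd' hda hd)
    have h1 : (X : F[X]) ^ Q ∣ X * (a ^ Q - a * b ^ (Q - 1)) := by
      rw [← key]; exact dvd_mul_of_dvd_right (pow_dvd_pow_of_dvd hd Q) _
    have h2 : (X : F[X]) ^ (Q - 1) ∣ a ^ Q - a * b ^ (Q - 1) := by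
      have h1' : (X : F[X]) * X ^ (Q - 1) ∣ X * (a ^ Q - a * b ^ (Q - 1)) := by
        rw [← pow_succ', Nat.sub_add_cancel (by omega)]; exact h1
      exact (mul_dvd_mul_iff_left hXne).mp h1'
    have h3 : (X : F[X]) ∣ a ^ Q := by
      have hX1 : (X : F[X]) ∣ X ^ (Q - 1) := dvd_pow_self _ (by omega)
      have h4 : (X : F[X]) ∣ a * b ^ (Q - 1) := Dvd.dvd.mul_left (dvd_pow hd (by omega)) a
      have h5 := dvd_add (hX1.trans h2) h4
      simpa using h5
    exact hXa (hXp.dvd_of_dvd_pow h3)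
  -- v' = 0
  have hv0 : v' = 0 := by
    by_contra hv
    have h1 : (X : F[X]) ∣ (C u' * X ^ 2 + C v') * b ^ Q := by
      rw [key]; exact dvd_mul_right _ _
    have h2 : (X : F[X]) ∣ C u' * X ^ 2 + C v' := by
      rcases hXp.dvd_mul.mp h1 with h | h
      · exact h
      · exact absurd (hXp.dvd_of_dvd_pow h) hXb
    have h3 : (X : F[X]) ∣ C v' := by
      have := dvd_sub h2 (Dvd.dvd.mul_left (dvd_pow_self (X : F[X]) two_ne_zero) (C u'))
      simpa using this
    exact hXp.not_unit (isUnit_of_dvd_unit h3 (isUnit_C.mpr (isUnit_iff_ne_zero.mpr hv)))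
  -- reduced key equation
  have key2 : C u' * X * b ^ Q = a ^ Q - a * b ^ (Q - 1) := by
    apply mul_left_cancel₀ hXne
    rw [hv0, map_zero, add_zero] at key
    linear_combination key
  -- u' = 0
  have hu0 : u' = 0 := by
    by_contra hu
    have hCu : (C u' : F[X]) ≠ 0 := C_ne_zero.mpr hu
    have hLne : C u' * X * b ^ Q ≠ 0 :=
      mul_ne_zero (mul_ne_zero hCu hXne) (pow_ne_zero _ hbne)
    have ha0 : a ≠ 0 := by
      intro h0
      rw [h0] at key2
      simp only [zero_pow (by omega : Q ≠ 0), zero_mul, sub_zero] at key2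
      exact hLne key2
    have hfac : a ^ Q - a * b ^ (Q - 1) = a * (a ^ (Q - 1) - b ^ (Q - 1)) := by
      rw [mul_sub, ← pow_succ', Nat.sub_add_cancel (by omega)]
    have hne : a ^ (Q - 1) - b ^ (Q - 1) ≠ 0 := by
      intro h0
      rw [hfac, h0, mul_zero] at key2
      exact hLne key2
    have hdL : (C u' * X * b ^ Q).natDegree = 1 + Q * b.natDegree := by
      rw [natDegree_mul (mul_ne_zero hCu hXne) (pow_ne_zero _ hbne),
        natDegree_mul hCu hXne, natDegree_C, natDegree_X, natDegree_pow]
    have heq : 1 + Q * b.natDegree = (a * (a ^ (Q - 1) - b ^ (Q - 1))).natDegree := by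
      rw [← hdL, key2, hfac]
    rcases le_or_gt a.natDegree b.natDegree with hle | hlt
    · have h1 : (a * (a ^ (Q - 1) - b ^ (Q - 1))).natDegree
          ≤ a.natDegree + (Q - 1) * b.natDegree := by
        refine natDegree_mul_le.trans (add_le_add_right ?_ _)
        refine (natDegree_sub_le _ _).trans ?_
        rw [natDegree_pow, natDegree_pow]
        exact max_le (Nat.mul_le_mul_left _ hle) le_rfl
      have hle2 : b.natDegree ≤ Q * b.natDegree := Nat.le_mul_of_pos_left _ (by omega)
      have h2 : Q * b.natDegree = (Q - 1) * b.natDegree + b.natDegree := by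
        rw [Nat.sub_one_mul]; omega
      omega
    · have hd1 : ((a ^ (Q - 1) : F[X]) - b ^ (Q - 1)).natDegree = (Q - 1) * a.natDegree := by
        rw [natDegree_sub_eq_left_of_natDegree_lt, natDegree_pow]
        rw [natDegree_pow, natDegree_pow]
        exact (Nat.mul_lt_mul_left (by omega)).mpr hlt
      have h1 : (a * (a ^ (Q - 1) - b ^ (Q - 1))).natDegree
          = a.natDegree + (Q - 1) * a.natDegree := by
        rw [natDegree_mul ha0 hne, hd1]
      have hle2 : a.natDegree ≤ Q * a.natDegree := Nat.le_mul_of_pos_left _ (by omega)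
      have h2 : a.natDegree + (Q - 1) * a.natDegree = Q * a.natDegree := by
        rw [Nat.sub_one_mul]; omega
      have h3 : Q * (b.natDegree + 1) ≤ Q * a.natDegree := Nat.mul_le_mul_left _ (by omega)
      have h4 : Q * (b.natDegree + 1) = Q * b.natDegree + Q := by ring
      omega
  have hinj : Function.Injective (algebraMap E F) := (algebraMap E F).injective
  constructor
  · exact hinj (by rw [← hu', hu0, map_zero])
  · exact hinj (by rw [← hv', hv0, map_zero])
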